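/- Let L, N be positive integers, and for each ℓ ≤ L let d_ℓ be a positive integer and R^{ℓ1},…,R^{ℓN} ∈ S^{d_ℓ}; define R_ℓ[y] = Σ_{i=1}^N y_i R^{ℓi} for y ∈ ℝ^N. Let 𝓡 ⊂ ℝ^L₊ be a nonempty convex compact set, and let Y = { y ∈ ℝ^N : ∃ r ∈ 𝓡 such that R_ℓ[y]² ⪯ r_ℓ I_{d_ℓ} for all ℓ ≤ L }. Let M be an n×N matrix and X = M·Y. Suppose Λ_ℓ ∈ S^{d_ℓ} with Λ_ℓ ⪰ 0 for each ℓ, and V ∈ S^n, τ ≥ 0 satisfy MᵀVM ⪯ Σ_ℓ 𝓡*_ℓ[Λ_ℓ] and φ_𝓡(λ[Λ]) ≤ τ, where (𝓡*_ℓ[Λ_ℓ])_{ij} = Tr(R^{ℓi} Λ_ℓ R^{ℓj}), λ[Λ] = (Tr(Λ₁),…,Tr(Λ_L)), and φ_𝓡(λ) = max_{r∈𝓡} rᵀλ. Then xᵀVx ≤ τ for every x ∈ X. -/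

import Mathlib

open Matrix

private lemma trace_psd_nonneg {m : ℕ} {A : Matrix (Fin m) (Fin m) ℝ}
    (hA : A.PosSemidef) : 0 ≤ A.trace := by
  rw [Matrix.trace]
  refine Finset.sum_nonneg fun i _ => ?_
  have := hA.dotProduct_mulVec_nonneg (Pi.single i 1)
  simpa [dotProduct, Matrix.mulVec, Pi.single_apply, Finset.sum_ite_eq,
    Matrix.diag] using this

open scoped MatrixOrder in
private lemma trace_mul_psd_nonneg {m : ℕ} {A B : Matrix (Fin m) (Fin m) ℝ}
    (hA : A.PosSemidef) (hB : B.PosSemidef) : 0 ≤ (A * B).trace := by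
  have hC : (CFC.sqrt B).PosSemidef := (CFC.sqrt_nonneg B).posSemidef
  have hCC : CFC.sqrt B * CFC.sqrt B = B := CFC.sqrt_mul_sqrt_self B hB.nonneg
  have hherm : (CFC.sqrt B)ᴴ = CFC.sqrt B := hC.1
  have key : (A * B).trace = ((CFC.sqrt B)ᴴ * A * CFC.sqrt B).trace := by
    rw [hherm, Matrix.trace_mul_cycle (CFC.sqrt B) A (CFC.sqrt B), hCC, Matrix.trace_mul_comm]
  rw [key]
  exact trace_psd_nonneg (hA.conjTranspose_mul_mul_same (CFC.sqrt B))

/-- cone compatible with a spectratope: let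
`Y = {y : ∃ r ∈ 𝓡, R_ℓ[y]² ⪯ r_ℓ I} `, `X = M·Y`.  If `Λ_ℓ ⪰ 0`,
`MᵀVM ⪯ Σ_ℓ 𝓡*_ℓ[Λ_ℓ]` and `φ_𝓡(λ[Λ]) ≤ τ`, then `xᵀVx ≤ τ` on `X`. -/
theorem stmt17
    {L N n : ℕ} (hL : 0 < L) (hN : 0 < N)
    (d : Fin L → ℕ) (hd : ∀ ℓ, 0 < d ℓ)
    (R : (ℓ : Fin L) → Fin N → Matrix (Fin (d ℓ)) (Fin (d ℓ)) ℝ)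
    (hRsymm : ∀ ℓ i, (R ℓ i).IsSymm)
    (𝓡 : Set (Fin L → ℝ)) (h𝓡ne : 𝓡.Nonempty) (h𝓡conv : Convex ℝ 𝓡)
    (h𝓡comp : IsCompact 𝓡) (h𝓡nonneg : ∀ r ∈ 𝓡, ∀ ℓ, 0 ≤ r ℓ)
    (Y : Set (Fin N → ℝ))
    (hY : Y = {y | ∃ r ∈ 𝓡, ∀ ℓ : Fin L,
      (r ℓ • (1 : Matrix (Fin (d ℓ)) (Fin (d ℓ)) ℝ) -
        (∑ i, y i • R ℓ i) * (∑ i, y i • R ℓ i)).PosSemidef})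
    (M : Matrix (Fin n) (Fin N) ℝ)
    (Λ : (ℓ : Fin L) → Matrix (Fin (d ℓ)) (Fin (d ℓ)) ℝ)
    (hΛ : ∀ ℓ, (Λ ℓ).PosSemidef)
    (V : Matrix (Fin n) (Fin n) ℝ) (hVsymm : V.IsSymm)
    (τ : ℝ) (hτ : 0 ≤ τ)
    -- `MᵀVM ⪯ Σ_ℓ 𝓡*_ℓ[Λ_ℓ]`, where `(𝓡*_ℓ[Λ_ℓ])_{ij} = Tr(R^{ℓi} Λ_ℓ R^{ℓj})`
    (hdom : ((∑ ℓ : Fin L, Matrix.of fun i j : Fin N => (R ℓ i * Λ ℓ * R ℓ j).trace)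
        - Mᵀ * V * M).PosSemidef)
    -- `φ_𝓡(λ[Λ]) ≤ τ`, with `λ[Λ] = (Tr Λ₁, …, Tr Λ_L)`
    (hφ : sSup ((fun r : Fin L → ℝ => ∑ ℓ, r ℓ * (Λ ℓ).trace) '' 𝓡) ≤ τ) :
    ∀ y ∈ Y, M.mulVec y ⬝ᵥ V.mulVec (M.mulVec y) ≤ τ := by
  intro y hy
  rw [hY] at hy
  obtain ⟨r, hr, hspec⟩ := hy
  set A : Matrix (Fin N) (Fin N) ℝ :=
    ∑ ℓ : Fin L, Matrix.of fun i j : Fin N => (R ℓ i * Λ ℓ * R ℓ j).trace with hA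
  -- Step A : xᵀVx = yᵀ(MᵀVM)y
  have stepA : y ⬝ᵥ (Mᵀ * V * M).mulVec y = M.mulVec y ⬝ᵥ V.mulVec (M.mulVec y) := by
    rw [← Matrix.mulVec_mulVec, ← Matrix.mulVec_mulVec, Matrix.dotProduct_mulVec,
      Matrix.vecMul_transpose]
  -- Step B : yᵀ(MᵀVM)y ≤ yᵀ A y
  have stepB : y ⬝ᵥ (Mᵀ * V * M).mulVec y ≤ y ⬝ᵥ A.mulVec y := by
    have := hdom.dotProduct_mulVec_nonneg y
    rw [Matrix.sub_mulVec, dotProduct_sub] at this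
    simpa [star] using sub_nonneg.mp (by simpa using this)
  -- Step C : yᵀ A y = Σ Tr(S Λ S)
  have stepC : y ⬝ᵥ A.mulVec y
      = ∑ ℓ, ((∑ i, y i • R ℓ i) * Λ ℓ * (∑ i, y i • R ℓ i)).trace := by
    have htr : ∀ (ℓ : Fin L) (i j : Fin N),
        (R ℓ j * Λ ℓ * R ℓ i).trace = (R ℓ i * Λ ℓ * R ℓ j).trace := by
      intro ℓ i j
      have hΛs : (Λ ℓ)ᵀ = Λ ℓ := by
        exact (by simpa [Matrix.conjTranspose] using (hΛ ℓ).1 : (Λ ℓ).IsSymm).eq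
      calc (R ℓ j * Λ ℓ * R ℓ i).trace
          = ((R ℓ j * Λ ℓ * R ℓ i)ᵀ).trace := (Matrix.trace_transpose _).symm
        _ = (R ℓ i * Λ ℓ * R ℓ j).trace := by
            rw [Matrix.transpose_mul, Matrix.transpose_mul, hΛs, (hRsymm ℓ i).eq,
              (hRsymm ℓ j).eq, ← Matrix.mul_assoc]
    have expand : ∀ ℓ, ((∑ i, y i • R ℓ i) * Λ ℓ * (∑ i, y i • R ℓ i)).trace
        = ∑ i, ∑ j, y i * y j * (R ℓ i * Λ ℓ * R ℓ j).trace := by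
      intro ℓ
      simp only [Finset.sum_mul, Finset.mul_sum, Matrix.smul_mul, Matrix.mul_smul,
        Matrix.trace_sum, Matrix.trace_smul, smul_eq_mul]
      refine Finset.sum_congr rfl fun i _ => Finset.sum_congr rfl fun j _ => ?_
      rw [htr ℓ i j]; ring
    have l1 : y ⬝ᵥ A.mulVec y
        = ∑ i, ∑ j, ∑ ℓ, y i * y j * (R ℓ i * Λ ℓ * R ℓ j).trace := by
      simp only [hA, dotProduct, Matrix.mulVec, Matrix.of_apply, Matrix.sum_apply,
        Finset.sum_apply, Finset.mul_sum, Finset.sum_mul]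
      refine Finset.sum_congr rfl fun i _ => Finset.sum_congr rfl fun j _ =>
        Finset.sum_congr rfl fun ℓ _ => by ring
    calc y ⬝ᵥ A.mulVec y
        = ∑ i, ∑ j, ∑ ℓ, y i * y j * (R ℓ i * Λ ℓ * R ℓ j).trace := l1
      _ = ∑ i, ∑ ℓ, ∑ j, y i * y j * (R ℓ i * Λ ℓ * R ℓ j).trace :=
          Finset.sum_congr rfl fun i _ => Finset.sum_comm
      _ = ∑ ℓ, ∑ i, ∑ j, y i * y j * (R ℓ i * Λ ℓ * R ℓ j).trace := Finset.sum_comm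
      _ = ∑ ℓ, ((∑ i, y i • R ℓ i) * Λ ℓ * (∑ i, y i • R ℓ i)).trace :=
          Finset.sum_congr rfl fun ℓ _ => (expand ℓ).symm
  -- Step E : each trace term is ≤ r ℓ * Tr(Λ ℓ)
  have stepE : ∀ ℓ, ((∑ i, y i • R ℓ i) * Λ ℓ * (∑ i, y i • R ℓ i)).trace
      ≤ r ℓ * (Λ ℓ).trace := by
    intro ℓ
    set S := ∑ i, y i • R ℓ i with hS
    have hcyc : (S * Λ ℓ * S).trace = (Λ ℓ * (S * S)).trace := by
      rw [Matrix.trace_mul_cycle S (Λ ℓ) S, Matrix.trace_mul_comm]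
    have hpos := trace_mul_psd_nonneg (hΛ ℓ) (hspec ℓ)
    rw [Matrix.mul_sub, Matrix.trace_sub, Matrix.mul_smul, Matrix.mul_one,
      Matrix.trace_smul, smul_eq_mul] at hpos
    rw [hcyc]
    linarith
  -- Step F : Σ r ℓ * Tr(Λ ℓ) ≤ τ
  have stepF : ∑ ℓ, r ℓ * (Λ ℓ).trace ≤ τ := by
    have hcont : Continuous (fun r : Fin L → ℝ => ∑ ℓ, r ℓ * (Λ ℓ).trace) :=
      continuous_finset_sum _ fun ℓ _ => (continuous_apply ℓ).mul continuous_const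
    exact le_trans (le_csSup (h𝓡comp.image hcont).bddAbove
      (Set.mem_image_of_mem _ hr)) hφ
  calc M.mulVec y ⬝ᵥ V.mulVec (M.mulVec y)
      = y ⬝ᵥ (Mᵀ * V * M).mulVec y := stepA.symm
    _ ≤ y ⬝ᵥ A.mulVec y := stepB
    _ = ∑ ℓ, ((∑ i, y i • R ℓ i) * Λ ℓ * (∑ i, y i • R ℓ i)).trace := stepC
    _ ≤ ∑ ℓ, r ℓ * (Λ ℓ).trace := Finset.sum_le_sum fun ℓ _ => stepE ℓ
    _ ≤ τ := stepF
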